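/- arXiv:2112.11861 — 3 statements merged into one kernel-verified Lean document; each statement's English description precedes it below -/
import Mathlib

section
/- For λ ∈ [0,1), the shifted Borel pmf P(X = n) = e^{−λ(n+1)} (λ(n+1))ⁿ/(n+1)! for n ∈ ℕ sums to 1 and has mean E[X] = λ/(1−λ). -/
open Finset Function
open scoped fwdDiff

lemma fd_pow_step (n : ℕ) :
    (Δ_[(1 : ℕ)]) (fun s : ℕ => (s : ℝ) ^ n) =
      ∑ i ∈ range n, (n.choose i : ℝ) • (fun s : ℕ => (s : ℝ) ^ i) := by
  funext s
  simp only [fwdDiff, Finset.sum_apply, Pi.smul_apply, smul_eq_mul]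
  push_cast
  rw [add_pow]
  rw [Finset.sum_range_succ]
  simp [mul_comm]

lemma fd_pow_lt : ∀ n N : ℕ, n < N → (Δ_[(1 : ℕ)])^[N] (fun s : ℕ => (s : ℝ) ^ n) 0 = 0 := by
  intro n
  induction n using Nat.strong_induction_on with
  | _ n IH =>
    intro N hN
    obtain ⟨N', rfl⟩ : ∃ N', N = N' + 1 := ⟨N - 1, by omega⟩
    rw [iterate_succ_apply, fd_pow_step, fwdDiff_iter_finset_sum, Finset.sum_apply]
    refine Finset.sum_eq_zero fun i hi => ?_
    rw [Finset.mem_range] at hi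
    rw [fwdDiff_iter_const_smul]
    simp [IH i hi N' (by omega)]

lemma fd_pow_self : ∀ n : ℕ, (Δ_[(1 : ℕ)])^[n] (fun s : ℕ => (s : ℝ) ^ n) 0 = n.factorial := by
  intro n
  induction n with
  | zero => simp
  | succ n IH =>
    rw [iterate_succ_apply, fd_pow_step, fwdDiff_iter_finset_sum, Finset.sum_apply]
    rw [Finset.sum_range_succ]
    simp only [fwdDiff_iter_const_smul]
    have h0 : ∀ i ∈ Finset.range n,
        ((((n+1).choose i : ℝ)) • ((Δ_[(1 : ℕ)])^[n] (fun s : ℕ => (s : ℝ) ^ i))) 0 = 0 := by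
      intro i hi
      rw [Finset.mem_range] at hi
      simp [fd_pow_lt i n hi]
    rw [Finset.sum_congr rfl h0]
    simp [IH, Nat.choose_succ_self_right, Nat.factorial_succ]

open Finset Function
open scoped fwdDiff


lemma key1 (n : ℕ) :
    ∑ m ∈ range (n + 1), (-1 : ℝ) ^ (n - m) * ((n + 1).choose (m + 1)) * ((m : ℝ) + 1) ^ n
      = if n = 0 then 1 else 0 := by
  have h := fwdDiff_iter_eq_sum_shift (1 : ℕ) (fun s : ℕ => (s : ℝ) ^ n) (n + 1) 0
  rw [Finset.sum_range_succ'] at h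
  simp only [zero_add, smul_eq_mul, zsmul_eq_mul, Nat.succ_sub_succ, smul_eq_mul,
    Nat.choose_zero_right, Nat.cast_one, mul_one] at h
  rcases eq_or_ne n 0 with rfl | hn
  · norm_num
  · rw [fd_pow_lt n (n + 1) (by omega)] at h
    rw [Nat.cast_zero, zero_pow hn] at h
    simp only [mul_zero, add_zero] at h
    rw [if_neg hn]
    refine Eq.trans (Finset.sum_congr rfl fun i _ => ?_) h.symm
    push_cast
    ring

lemma key2 (n : ℕ) :
    ∑ m ∈ range (n + 1), (-1 : ℝ) ^ (n - m) * ((n + 1).choose (m + 1)) * ((m : ℝ) + 1) ^ (n + 1)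
      = (n + 1).factorial := by
  have h := fwdDiff_iter_eq_sum_shift (1 : ℕ) (fun s : ℕ => (s : ℝ) ^ (n + 1)) (n + 1) 0
  rw [Finset.sum_range_succ'] at h
  simp only [zero_add, smul_eq_mul, zsmul_eq_mul, Nat.succ_sub_succ,
    Nat.choose_zero_right, Nat.cast_one, mul_one] at h
  rw [fd_pow_self (n + 1)] at h
  rw [Nat.cast_zero, zero_pow (by omega : n + 1 ≠ 0)] at h
  simp only [mul_zero, add_zero] at h
  refine Eq.trans (Finset.sum_congr rfl fun i _ => ?_) h.symm
  push_cast
  ring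

open Filter Function FormalMultilinearSeries
open scoped Topology NNReal ENNReal

lemma hasSum_ofScalars (c : ℕ → ℝ) (hc0 : ∀ k, 0 ≤ c k) (hc : ∀ k, c k ≤ Real.exp 1 ^ k)
    (x : ℝ) (hx : |x| * Real.exp 1 < 1) :
    HasSum (fun k => c k * x ^ k) (ofScalarsSum c x) := by
  have hs : Summable fun k => c k * x ^ k := by
    refine Summable.of_norm_bounded (g := fun k => (|x| * Real.exp 1) ^ k) ?_ ?_
    · exact summable_geometric_of_lt_one (by positivity) hx
    · intro k
      rw [norm_mul, Real.norm_eq_abs, Real.norm_eq_abs, abs_of_nonneg (hc0 k), abs_pow]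
      simp only [mul_pow]
      rw [mul_comm (|x| ^ k)]
      exact mul_le_mul (hc k) le_rfl (by positivity) (by positivity)
  have := hs.hasSum
  rwa [show ∑' k, c k * x ^ k = ofScalarsSum c x by
    rw [ofScalars_sum_eq]; simp [smul_eq_mul]] at this

lemma analyticAt_ofScalars (c : ℕ → ℝ) (hc0 : ∀ k, 0 ≤ c k) (hc : ∀ k, c k ≤ Real.exp 1 ^ k)
    (x : ℝ) (hx : |x| * Real.exp 1 < 1) :
    AnalyticAt ℝ (ofScalarsSum (E := ℝ) c) x := by
  set p := ofScalars ℝ c with hp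
  have hE : (0:ℝ) < Real.exp 1 := Real.exp_pos 1
  have hrad : ∀ r : ℝ≥0, (r : ℝ) * Real.exp 1 ≤ 1 → (r : ℝ≥0∞) ≤ p.radius := by
    intro r hr
    refine p.le_radius_of_bound 1 fun n => ?_
    rw [ofScalars_norm, Real.norm_eq_abs, abs_of_nonneg (hc0 n)]
    calc c n * (r : ℝ) ^ n ≤ Real.exp 1 ^ n * (r : ℝ) ^ n :=
          mul_le_mul_of_nonneg_right (hc n) (by positivity)
      _ = ((r : ℝ) * Real.exp 1) ^ n := by rw [mul_pow]; ring
      _ ≤ 1 ^ n := pow_le_pow_left₀ (by positivity) hr n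
      _ = 1 := one_pow n
  have hxE : |x| < (Real.exp 1)⁻¹ := by
    nlinarith [abs_nonneg x, mul_pos hE (inv_pos.mpr hE), Real.exp_pos 1,
      mul_inv_cancel₀ (ne_of_gt hE)]
  set r' : ℝ≥0 := ⟨(|x| + (Real.exp 1)⁻¹) / 2, by positivity⟩ with hr'
  have hxr : |x| < (r' : ℝ) := by
    change |x| < (|x| + (Real.exp 1)⁻¹) / 2
    linarith
  have hr'E : (r' : ℝ) * Real.exp 1 ≤ 1 := by
    change (|x| + (Real.exp 1)⁻¹) / 2 * Real.exp 1 ≤ 1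
    have h1 : (Real.exp 1)⁻¹ * Real.exp 1 = 1 := inv_mul_cancel₀ (ne_of_gt hE)
    nlinarith
  have hr'pos : (0 : ℝ≥0∞) < r' := by
    rw [ENNReal.coe_pos, ← NNReal.coe_pos]
    change 0 < (|x| + (Real.exp 1)⁻¹) / 2
    positivity
  have hpos : 0 < p.radius := lt_of_lt_of_le hr'pos (hrad r' hr'E)
  have hball : HasFPowerSeriesOnBall p.sum p 0 p.radius := p.hasFPowerSeriesOnBall hpos
  have hx_mem : x ∈ Metric.eball (0 : ℝ) p.radius := by
    rw [Metric.mem_eball, edist_zero_right]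
    refine lt_of_lt_of_le ?_ (hrad r' hr'E)
    exact ENNReal.coe_lt_coe.mpr
      (by rw [← NNReal.coe_lt_coe, coe_nnnorm, Real.norm_eq_abs]; exact hxr)
  exact hball.analyticOnNhd x hx_mem

open Finset Function FormalMultilinearSeries
open scoped Topology NNReal ENNReal


noncomputable def borC (d : ℕ) : ℕ → ℝ := fun k =>
  if k = 0 then 0 else (k : ℝ) ^ (k - 1 + d) / k.factorial

lemma borC_succ (d m : ℕ) : borC d (m + 1) = ((m : ℝ) + 1) ^ (m + d) / (m + 1).factorial := by
  simp [borC]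

lemma borC_zero (d : ℕ) : borC d 0 = 0 := by simp [borC]

lemma borC_nonneg (d k : ℕ) : 0 ≤ borC d k := by
  unfold borC; split <;> positivity

lemma borC_le (d : ℕ) (hd : d ≤ 1) (k : ℕ) : borC d k ≤ Real.exp 1 ^ k := by
  unfold borC
  split
  · positivity
  · rename_i hk
    rw [Real.exp_one_pow]
    calc (k : ℝ) ^ (k - 1 + d) / k.factorial ≤ (k : ℝ) ^ k / k.factorial := by
          gcongr
          · exact_mod_cast Nat.one_le_iff_ne_zero.mpr hk
          · omega
      _ ≤ Real.exp k := Real.pow_div_factorial_le_exp _ (by positivity) k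

-- the real exp HasSum
lemma hasSum_exp_real (x : ℝ) : HasSum (fun n => x ^ n / n.factorial) (Real.exp x) := by
  rw [Real.exp_eq_exp_ℝ]
  exact NormedSpace.expSeries_div_hasSum_exp x

section Core
variable {d : ℕ} {l : ℝ}

lemma exp_pow_aux (m : ℕ) : Real.exp (-l) ^ (m + 1) = Real.exp (-(l * ((m : ℝ) + 1))) := by
  rw [← Real.exp_nat_mul]
  congr 1
  push_cast
  ring

lemma borC_main (hd : d ≤ 1) (hl : |l| < 8⁻¹) :
    ∃ S : ℝ, HasSum (fun k => borC d k * (l * Real.exp (-l)) ^ k) S ∧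
      HasSum (fun n : ℕ => (l ^ (n + 1) / (n + 1).factorial) *
        ∑ m ∈ range (n + 1),
          (-1 : ℝ) ^ (n - m) * ((n + 1).choose (m + 1)) * ((m : ℝ) + 1) ^ (n + d)) S := by
  have hE : (0 : ℝ) < Real.exp 1 := Real.exp_pos 1
  set x := l * Real.exp (-l) with hx
  set F : ℕ × ℕ → ℝ := fun p =>
    (l ^ (p.1 + 1) * ((p.1 : ℝ) + 1) ^ (p.1 + d) / (p.1 + 1).factorial) *
      ((-(l * ((p.1 : ℝ) + 1))) ^ p.2 / p.2.factorial) with hF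
  -- absolute value rows
  have habs_row : ∀ m : ℕ, HasSum (fun j => |F (m, j)|)
      ((|l| ^ (m + 1) * ((m : ℝ) + 1) ^ (m + d) / (m + 1).factorial) *
        Real.exp (|l| * ((m : ℝ) + 1))) := by
    intro m
    have h1 := (hasSum_exp_real (|l| * ((m : ℝ) + 1))).mul_left
      (|l| ^ (m + 1) * ((m : ℝ) + 1) ^ (m + d) / (m + 1).factorial)
    convert h1 using 2 with j
    · rfl
    simp only [hF]
    have hm1 : |(m : ℝ) + 1| = (m : ℝ) + 1 := abs_of_nonneg (by positivity)
    simp only [abs_mul, abs_div, abs_pow, abs_neg, Nat.abs_cast, hm1, mul_pow]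
    try ring
  have hr1 : |l| * Real.exp 1 ^ 2 < 1 := by
    have h9 : Real.exp 1 < 2.7182818286 := Real.exp_one_lt_d9
    nlinarith [abs_nonneg l, hE]
  have habs : Summable fun p : ℕ × ℕ => |F p| := by
    rw [summable_prod_of_nonneg (fun p => abs_nonneg _)]
    constructor
    · exact fun m => (habs_row m).summable
    · refine Summable.of_nonneg_of_le (fun m => tsum_nonneg fun j => abs_nonneg _)
        (fun m => ?_) (summable_geometric_of_lt_one (by positivity) hr1)
      rw [(habs_row m).tsum_eq]
      have h2 : ((m : ℝ) + 1) ^ (m + d) / (m + 1).factorial ≤ Real.exp 1 ^ (m + 1) := by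
        have := borC_le d hd (m + 1)
        rwa [borC_succ] at this
      have h3 : Real.exp (|l| * ((m : ℝ) + 1)) ≤ Real.exp 1 ^ (m + 1) := by
        rw [show |l| * ((m : ℝ) + 1) = ((m + 1 : ℕ) : ℝ) * |l| by push_cast; ring,
          Real.exp_nat_mul]
        exact pow_le_pow_left₀ (Real.exp_pos _).le
          (Real.exp_le_exp.mpr (by linarith)) _
      have hre : |l| ^ (m + 1) * ((m : ℝ) + 1) ^ (m + d) / (m + 1).factorial *
          Real.exp (|l| * ((m : ℝ) + 1)) =
          |l| ^ (m + 1) * (((m : ℝ) + 1) ^ (m + d) / (m + 1).factorial) *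
          Real.exp (|l| * ((m : ℝ) + 1)) := by ring
      rw [hre]
      calc |l| ^ (m + 1) * (((m : ℝ) + 1) ^ (m + d) / (m + 1).factorial) *
            Real.exp (|l| * ((m : ℝ) + 1))
          ≤ |l| ^ (m + 1) * Real.exp 1 ^ (m + 1) * Real.exp 1 ^ (m + 1) :=
            mul_le_mul (mul_le_mul_of_nonneg_left h2 (by positivity)) h3
              (Real.exp_pos _).le (by positivity)
        _ = (|l| * Real.exp 1 ^ 2) ^ (m + 1) := by ring
        _ ≤ (|l| * Real.exp 1 ^ 2) ^ m :=
            pow_le_pow_of_le_one (by positivity) hr1.le (Nat.le_succ m)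
  have hFsum : Summable F := summable_abs_iff.mp habs
  refine ⟨∑' p, F p, ?_, ?_⟩
  · -- fiberwise over first coordinate
    have hfib : ∀ m : ℕ, HasSum (fun j => F (m, j)) (borC d (m + 1) * x ^ (m + 1)) := by
      intro m
      have h1 := (hasSum_exp_real (-(l * ((m : ℝ) + 1)))).mul_left
        (l ^ (m + 1) * ((m : ℝ) + 1) ^ (m + d) / (m + 1).factorial)
      convert h1 using 1
      · rfl
      rw [borC_succ, hx, mul_pow, exp_pow_aux]
      ring
    have hrow := hFsum.hasSum.prod_fiberwise hfib
    have h0 : ∑ i ∈ range 1, borC d i * x ^ i = 0 := by simp [borC]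
    have := (hasSum_nat_add_iff (f := fun k => borC d k * x ^ k) 1).mp hrow
    rwa [h0, add_zero] at this
  · -- antidiagonal grouping
    have hsig : HasSum (F ∘ (Finset.HasAntidiagonal.sigmaAntidiagonalEquivProd (A := ℕ))) (∑' p, F p) :=
      (Equiv.hasSum_iff _).mpr hFsum.hasSum
    have hfib2 : ∀ n : ℕ,
        HasSum (fun p : (Finset.HasAntidiagonal.antidiagonal n : Finset (ℕ × ℕ)) =>
          (F ∘ (Finset.HasAntidiagonal.sigmaAntidiagonalEquivProd (A := ℕ))) ⟨n, p⟩)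
          (∑ p ∈ Finset.HasAntidiagonal.antidiagonal n, F p) := by
      intro n
      have := hasSum_fintype (fun p : (Finset.HasAntidiagonal.antidiagonal n : Finset (ℕ × ℕ)) => F p)
      rwa [Finset.sum_coe_sort] at this
    have hgrp := hsig.sigma hfib2
    have heval : ∀ n : ℕ, ∑ p ∈ Finset.HasAntidiagonal.antidiagonal n, F p =
        (l ^ (n + 1) / (n + 1).factorial) *
          ∑ m ∈ range (n + 1),
            (-1 : ℝ) ^ (n - m) * ((n + 1).choose (m + 1)) * ((m : ℝ) + 1) ^ (n + d) := by
      intro n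
      rw [Finset.Nat.sum_antidiagonal_eq_sum_range_succ_mk, Finset.mul_sum]
      refine Finset.sum_congr rfl fun m hm => ?_
      rw [Finset.mem_range] at hm
      have hm' : m ≤ n := by omega
      have hfact : ((n + 1).factorial : ℝ) =
          ((n + 1).choose (m + 1) : ℝ) * ((m + 1).factorial : ℝ) * ((n - m).factorial : ℝ) := by
        have := Nat.choose_mul_factorial_mul_factorial (show m + 1 ≤ n + 1 by omega)
        rw [Nat.succ_sub_succ] at this
        exact_mod_cast this.symm
      simp only [hF]
      rw [show (-(l * ((m : ℝ) + 1))) ^ (n - m) = (-1 : ℝ) ^ (n - m) *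
            (l ^ (n - m) * ((m : ℝ) + 1) ^ (n - m))  by rw [neg_pow, mul_pow]; try ring]
      rw [show l ^ (n + 1) = l ^ (m + 1) * l ^ (n - m) by rw [← pow_add]; congr 1; omega]
      rw [show ((m : ℝ) + 1) ^ (n + d) = ((m : ℝ) + 1) ^ (m + d) * ((m : ℝ) + 1) ^ (n - m) by
        rw [← pow_add]; congr 1; omega]
      rw [hfact]
      have hne1 : ((m + 1).factorial : ℝ) ≠ 0 := by positivity
      have hne2 : (((n - m)).factorial : ℝ) ≠ 0 := by positivity
      have hne3 : ((n + 1).choose (m + 1) : ℝ) ≠ 0 := by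
        have := Nat.choose_pos (show m + 1 ≤ n + 1 by omega)
        positivity
      field_simp
    rw [funext heval] at hgrp
    exact hgrp

end Core

open Finset Function FormalMultilinearSeries
open scoped Topology NNReal ENNReal

lemma small_A {l : ℝ} (hl : |l| < 8⁻¹) :
    HasSum (fun k => borC 0 k * (l * Real.exp (-l)) ^ k) l := by
  obtain ⟨S, h1, h2⟩ := borC_main (d := 0) (by norm_num) hl
  have h2' : (fun n : ℕ => (l ^ (n + 1) / (n + 1).factorial) *
        ∑ m ∈ range (n + 1),
          (-1 : ℝ) ^ (n - m) * ((n + 1).choose (m + 1)) * ((m : ℝ) + 1) ^ (n + 0)) =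
      fun n : ℕ => if n = 0 then l else 0 := by
    funext n
    have := key1 n
    simp only [Nat.add_zero] at *
    rw [this]
    rcases eq_or_ne n 0 with rfl | hn
    · simp [Nat.factorial]
    · simp [hn]
  rw [h2'] at h2
  rwa [h2.unique (hasSum_ite_eq 0 l)] at h1

lemma small_B {l : ℝ} (hl : |l| < 8⁻¹) :
    HasSum (fun k => borC 1 k * (l * Real.exp (-l)) ^ k) (l / (1 - l)) := by
  obtain ⟨S, h1, h2⟩ := borC_main (d := 1) (le_refl 1) hl
  have h2' : (fun n : ℕ => (l ^ (n + 1) / (n + 1).factorial) *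
        ∑ m ∈ range (n + 1),
          (-1 : ℝ) ^ (n - m) * ((n + 1).choose (m + 1)) * ((m : ℝ) + 1) ^ (n + 1)) =
      fun n : ℕ => l ^ (n + 1) := by
    funext n
    rw [key2 n]
    have : ((n + 1).factorial : ℝ) ≠ 0 := by positivity
    field_simp
  rw [h2'] at h2
  have hgeo : HasSum (fun n : ℕ => l ^ (n + 1)) (l / (1 - l)) := by
    have h := (hasSum_geometric_of_norm_lt_one
      (show ‖l‖ < 1 by rw [Real.norm_eq_abs]; linarith)).mul_left l
    have heq : (fun n : ℕ => l * l ^ n) = fun n : ℕ => l ^ (n + 1) := by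
      funext n; rw [pow_succ]; ring
    rw [heq] at h
    rwa [show l * (1 - l)⁻¹ = l / (1 - l) by rw [div_eq_mul_inv]] at h
  rwa [h2.unique hgeo] at h1

lemma xE_lt {t : ℝ} (ht : t ∈ Set.Ioo (-8⁻¹ : ℝ) 1) :
    |t * Real.exp (-t)| * Real.exp 1 < 1 := by
  obtain ⟨h1, h2⟩ := ht
  rw [abs_mul, abs_of_pos (Real.exp_pos _)]
  have hkey : |t| * Real.exp (-t) * Real.exp 1 = |t| * Real.exp (1 - t) := by
    rw [mul_assoc, ← Real.exp_add]; ring_nf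
  rw [hkey]
  rcases le_or_gt 0 t with h | h
  · rw [abs_of_nonneg h]
    have ht1 : t < Real.exp (t - 1) := by
      have := Real.add_one_lt_exp (show t - 1 ≠ 0 by intro hh; nlinarith)
      linarith
    calc t * Real.exp (1 - t) < Real.exp (t - 1) * Real.exp (1 - t) :=
          mul_lt_mul_of_pos_right ht1 (Real.exp_pos _)
      _ = 1 := by rw [← Real.exp_add]; norm_num
  · rw [abs_of_neg h]
    have he : Real.exp (1 - t) < Real.exp 2 := Real.exp_lt_exp.mpr (by linarith)
    have h22 : Real.exp 2 = Real.exp 1 * Real.exp 1 := by rw [← Real.exp_add]; norm_num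
    have h9 : Real.exp 1 < 2.7182818286 := Real.exp_one_lt_d9
    nlinarith [Real.exp_pos (1 - t), Real.exp_pos 1]

lemma inner_analytic (t : ℝ) : AnalyticAt ℝ (fun s : ℝ => s * Real.exp (-s)) t := by
  have h1 : AnalyticAt ℝ (fun s : ℝ => Real.exp (-s)) t := AnalyticAt.rexp (analyticAt_id.neg)
  exact analyticAt_id.mul h1

lemma comp_analytic (d : ℕ) (hd : d ≤ 1) :
    AnalyticOnNhd ℝ (fun t : ℝ => ofScalarsSum (E := ℝ) (borC d) (t * Real.exp (-t)))
      (Set.Ioo (-8⁻¹ : ℝ) 1) := by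
  intro t ht
  have h := AnalyticAt.comp (g := ofScalarsSum (E := ℝ) (borC d))
    (f := fun s : ℝ => s * Real.exp (-s)) (x := t)
    (analyticAt_ofScalars (borC d) (borC_nonneg d) (borC_le d hd)
      (t * Real.exp (-t)) (xE_lt ht)) (inner_analytic t)
  simpa [Function.comp_def] using h

lemma eq_A : Set.EqOn (fun t : ℝ => ofScalarsSum (E := ℝ) (borC 0) (t * Real.exp (-t)))
    (fun t : ℝ => t) (Set.Ioo (-8⁻¹ : ℝ) 1) := by
  apply AnalyticOnNhd.eqOn_of_preconnected_of_eventuallyEq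
    (comp_analytic 0 (by norm_num)) (fun t _ => analyticAt_id)
    isPreconnected_Ioo (show (0:ℝ) ∈ Set.Ioo (-8⁻¹ : ℝ) 1 by constructor <;> norm_num)
  have hmem : Set.Ioo (-8⁻¹ : ℝ) 8⁻¹ ∈ 𝓝 (0 : ℝ) := Ioo_mem_nhds (by norm_num) (by norm_num)
  refine Filter.eventuallyEq_of_mem hmem fun t ht => ?_
  have hlt : |t| < 8⁻¹ := abs_lt.mpr ⟨ht.1, ht.2⟩
  have h := hasSum_ofScalars (borC 0) (borC_nonneg 0) (borC_le 0 (by norm_num))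
    (t * Real.exp (-t)) (xE_lt ⟨ht.1, lt_trans ht.2 (by norm_num)⟩)
  exact h.unique (small_A hlt)

lemma eq_B : Set.EqOn (fun t : ℝ => ofScalarsSum (E := ℝ) (borC 1) (t * Real.exp (-t)))
    (fun t : ℝ => t / (1 - t)) (Set.Ioo (-8⁻¹ : ℝ) 1) := by
  apply AnalyticOnNhd.eqOn_of_preconnected_of_eventuallyEq
    (comp_analytic 1 (by norm_num))
    (fun t ht => by
      have hden : AnalyticAt ℝ (fun s : ℝ => 1 - s) t := analyticAt_const.sub analyticAt_id
      have hnum : AnalyticAt ℝ (fun s : ℝ => s) t := analyticAt_id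
      have hne : (fun s : ℝ => 1 - s) t ≠ 0 := ne_of_gt (sub_pos.mpr ht.2)
      exact hnum.div hden hne)
    isPreconnected_Ioo (show (0:ℝ) ∈ Set.Ioo (-8⁻¹ : ℝ) 1 by constructor <;> norm_num)
  have hmem : Set.Ioo (-8⁻¹ : ℝ) 8⁻¹ ∈ 𝓝 (0 : ℝ) := Ioo_mem_nhds (by norm_num) (by norm_num)
  refine Filter.eventuallyEq_of_mem hmem fun t ht => ?_
  have hlt : |t| < 8⁻¹ := abs_lt.mpr ⟨ht.1, ht.2⟩
  have h := hasSum_ofScalars (borC 1) (borC_nonneg 1) (borC_le 1 (by norm_num))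
    (t * Real.exp (-t)) (xE_lt ⟨ht.1, lt_trans ht.2 (by norm_num)⟩)
  exact h.unique (small_B hlt)

/-- The shifted Borel pmf sums to one and has mean `λ/(1-λ)` for `λ ∈ [0,1)`. -/
theorem shifted_borel_sum_and_mean (l : ℝ) (hl : l ∈ Set.Ico (0:ℝ) 1) :
    HasSum (fun n : ℕ =>
        Real.exp (-(l * (n + 1))) * (l * (n + 1)) ^ n / (Nat.factorial (n + 1))) 1 ∧
      HasSum (fun n : ℕ => (n : ℝ) *
        (Real.exp (-(l * (n + 1))) * (l * (n + 1)) ^ n / (Nat.factorial (n + 1))))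
        (l / (1 - l)) := by
  obtain ⟨hl0, hl1⟩ := hl
  rcases eq_or_lt_of_le hl0 with rfl | hpos
  · constructor
    · have : (fun n : ℕ => Real.exp (-((0:ℝ) * (n + 1))) * ((0:ℝ) * (n + 1)) ^ n /
          (Nat.factorial (n + 1))) = fun n : ℕ => if n = 0 then (1:ℝ) else 0 := by
        funext n
        rcases eq_or_ne n 0 with rfl | hn
        · simp
        · simp [zero_pow hn, hn]
      rw [this]
      exact hasSum_ite_eq 0 1
    · have : (fun n : ℕ => (n : ℝ) * (Real.exp (-((0:ℝ) * (n + 1))) * ((0:ℝ) * (n + 1)) ^ n /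
          (Nat.factorial (n + 1)))) = fun n : ℕ => (0:ℝ) := by
        funext n
        rcases eq_or_ne n 0 with rfl | hn
        · simp
        · simp [zero_pow hn]
      rw [this]
      simpa using hasSum_zero
  · have hlne : l ≠ 0 := ne_of_gt hpos
    have hmem : l ∈ Set.Ioo (-8⁻¹ : ℝ) 1 := ⟨by linarith, hl1⟩
    set x := l * Real.exp (-l) with hx
    have hA : HasSum (fun k => borC 0 k * x ^ k) l := by
      have h := hasSum_ofScalars (borC 0) (borC_nonneg 0) (borC_le 0 (by norm_num)) x
        (xE_lt hmem)
      have hv : ofScalarsSum (E := ℝ) (borC 0) x = l := eq_A hmem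
      rwa [hv] at h
    have hB : HasSum (fun k => borC 1 k * x ^ k) (l / (1 - l)) := by
      have h := hasSum_ofScalars (borC 1) (borC_nonneg 1) (borC_le 1 (by norm_num)) x
        (xE_lt hmem)
      have hv : ofScalarsSum (E := ℝ) (borC 1) x = l / (1 - l) := eq_B hmem
      rwa [hv] at h
    -- shift off the zeroth term
    have hA1 : HasSum (fun n : ℕ => borC 0 (n + 1) * x ^ (n + 1)) l := by
      have h := (hasSum_nat_add_iff' (f := fun k => borC 0 k * x ^ k) 1).mpr hA
      simpa [borC_zero] using h
    have hB1 : HasSum (fun n : ℕ => borC 1 (n + 1) * x ^ (n + 1)) (l / (1 - l)) := by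
      have h := (hasSum_nat_add_iff' (f := fun k => borC 1 k * x ^ k) 1).mpr hB
      simpa [borC_zero] using h
    have hterm1 : ∀ n : ℕ, borC 0 (n + 1) * x ^ (n + 1) / l =
        Real.exp (-(l * (n + 1))) * (l * (n + 1)) ^ n / (Nat.factorial (n + 1)) := by
      intro n
      rw [borC_succ, hx, mul_pow, exp_pow_aux, mul_pow]
      have hf : ((n + 1).factorial : ℝ) ≠ 0 := by positivity
      field_simp
      ring
    have hfirst : HasSum (fun n : ℕ =>
        Real.exp (-(l * (n + 1))) * (l * (n + 1)) ^ n / (Nat.factorial (n + 1))) 1 := by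
      have h := hA1.div_const l
      rw [div_self hlne] at h
      rwa [funext hterm1] at h
    refine ⟨hfirst, ?_⟩
    have hterm2 : ∀ n : ℕ, borC 1 (n + 1) * x ^ (n + 1) / l =
        ((n : ℝ) + 1) *
          (Real.exp (-(l * (n + 1))) * (l * (n + 1)) ^ n / (Nat.factorial (n + 1))) := by
      intro n
      rw [borC_succ, hx, mul_pow, exp_pow_aux, mul_pow, pow_succ]
      have hf : ((n + 1).factorial : ℝ) ≠ 0 := by positivity
      field_simp
      ring
    have hsecond : HasSum (fun n : ℕ => ((n : ℝ) + 1) *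
        (Real.exp (-(l * (n + 1))) * (l * (n + 1)) ^ n / (Nat.factorial (n + 1))))
        (1 / (1 - l)) := by
      have h := hB1.div_const l
      rw [funext hterm2] at h
      rwa [show l / (1 - l) / l = 1 / (1 - l) by
        rw [div_div, mul_comm, ← div_div, div_self hlne]] at h
    have h := hsecond.sub hfirst
    have heq : (fun n : ℕ => ((n : ℝ) + 1) *
        (Real.exp (-(l * (n + 1))) * (l * (n + 1)) ^ n / (Nat.factorial (n + 1))) -
        Real.exp (-(l * (n + 1))) * (l * (n + 1)) ^ n / (Nat.factorial (n + 1))) =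
        fun n : ℕ => (n : ℝ) *
        (Real.exp (-(l * (n + 1))) * (l * (n + 1)) ^ n / (Nat.factorial (n + 1))) := by
      funext n; ring
    rw [heq] at h
    have h1l : (1:ℝ) - l ≠ 0 := sub_ne_zero.mpr (ne_of_gt hl1)
    rwa [show 1 / (1 - l) - 1 = l / (1 - l) by field_simp; ring] at h
end

section
/- If X follows the one-parameter Bell distribution with pmf P(X = n) = θⁿ Bₙ e^{1−e^θ}/n! (Bₙ the n-th Bell number, θ > 0), then E[X] = θe^θ and Var[X] = θe^θ(1+θ). -/
/-- The `n`-th Bell number, via Dobinski's formula: the `n`-th moment of a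
Poisson random variable with unit mean. -/
noncomputable def bellR (n : ℕ) : ℝ :=
  Real.exp (-1) * ∑' k : ℕ, (k : ℝ) ^ n / (Nat.factorial k)

lemma hasSum_exp' (x : ℝ) : HasSum (fun n : ℕ => x ^ n / n.factorial) (Real.exp x) := by
  rw [Real.exp_eq_exp_ℝ]
  exact NormedSpace.expSeries_div_hasSum_exp x

lemma hasSum_mul_exp (x : ℝ) :
    HasSum (fun n : ℕ => (n : ℝ) * x ^ n / n.factorial) (x * Real.exp x) := by
  have h := (hasSum_exp' x).mul_left x
  refine (Function.Injective.hasSum_iff (g := Nat.succ) Nat.succ_injective ?_).mp ?_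
  · intro m hm
    have : m = 0 := by
      rcases m with _ | m
      · rfl
      · exact absurd ⟨m, rfl⟩ hm
    simp [this]
  · convert h using 2 with n
    · rfl
    simp only [Function.comp_apply, Nat.succ_eq_add_one]
    push_cast [Nat.factorial_succ]
    field_simp
    ring

lemma hasSum_sq_exp (x : ℝ) :
    HasSum (fun n : ℕ => (n : ℝ) ^ 2 * x ^ n / n.factorial)
      ((x ^ 2 + x) * Real.exp x) := by
  have h := ((hasSum_mul_exp x).add (hasSum_exp' x)).mul_left x
  refine (Function.Injective.hasSum_iff (g := Nat.succ) Nat.succ_injective ?_).mp ?_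
  · intro m hm
    have : m = 0 := by
      rcases m with _ | m
      · rfl
      · exact absurd ⟨m, rfl⟩ hm
    simp [this]
  · convert h using 1
    · rfl
    · funext n
      simp only [Function.comp_apply, Nat.succ_eq_add_one]
      push_cast [Nat.factorial_succ]
      field_simp
      ring
    · ring

lemma summable_kpow (n : ℕ) : Summable (fun k : ℕ => (k : ℝ) ^ n / k.factorial) := by
  refine Summable.of_nonneg_of_le (fun k => by positivity) (fun k => ?_)
    (Real.summable_pow_div_factorial ((2 : ℝ) ^ n))
  have hk : (k : ℝ) ^ n ≤ ((2 : ℝ) ^ n) ^ k := by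
    rw [← pow_mul, mul_comm n k, pow_mul]
    refine pow_le_pow_left₀ (by positivity) ?_ n
    exact_mod_cast k.lt_two_pow_self.le
  gcongr

set_option maxHeartbeats 1000000 in
lemma bell_swap (θ : ℝ) (hθ : 0 < θ) (w : ℕ → ℝ) (hw : ∀ n, 0 ≤ w n)
    (P : ℕ → ℝ)
    (hP : ∀ k : ℕ, HasSum (fun n : ℕ => w n * (θ * k) ^ n / n.factorial) (P k))
    (S : ℝ)
    (hS : HasSum (fun k : ℕ => Real.exp (-Real.exp θ) * P k / k.factorial) S) :
    HasSum (fun n : ℕ => w n *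
      (θ ^ n * bellR n * Real.exp (1 - Real.exp θ) / n.factorial)) S := by
  set A := Real.exp (-Real.exp θ) with hA
  have hA0 : (0 : ℝ) < A := Real.exp_pos _
  set f : ℕ × ℕ → ℝ :=
    fun p => A * (w p.2 * (θ * p.1) ^ p.2 / p.2.factorial) / p.1.factorial with hf
  have hfib : ∀ k : ℕ, HasSum (fun n => f (k, n)) (A * P k / k.factorial) :=
    fun k => ((hP k).mul_left A).div_const _
  have hf0 : 0 ≤ f := by
    intro p
    exact div_nonneg (mul_nonneg hA0.le (div_nonneg (mul_nonneg (hw _)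
      (pow_nonneg (mul_nonneg hθ.le (Nat.cast_nonneg _)) _)) (Nat.cast_nonneg _)))
      (Nat.cast_nonneg _)
  have hsummable : Summable f := by
    refine (summable_prod_of_nonneg hf0).mpr ⟨fun k => (hfib k).summable, ?_⟩
    exact hS.summable.congr fun k => ((hfib k).tsum_eq).symm
  have htsum : HasSum (fun k => A * P k / (k.factorial : ℝ)) (∑' p, f p) :=
    hsummable.hasSum.prod_fiberwise hfib
  have hT : ∑' p, f p = S := htsum.unique hS
  have hfS : HasSum f S := hT ▸ hsummable.hasSum
  have hswap : HasSum (fun p : ℕ × ℕ => f (p.2, p.1)) S :=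
    (Equiv.prodComm ℕ ℕ).hasSum_iff.mpr hfS
  refine hswap.prod_fiberwise fun n => ?_
  have hs := ((summable_kpow n).hasSum).mul_left (A * w n * θ ^ n / n.factorial)
  have h10 : Real.exp (-1) * Real.exp 1 = 1 := by
    rw [← Real.exp_add]; norm_num
  have hE : Real.exp (1 - Real.exp θ) = Real.exp 1 * A := by
    rw [hA, ← Real.exp_add]; ring_nf
  convert hs using 1
  · rfl
  · funext k
    simp only [hf, mul_pow]
    ring
  · rw [bellR, hE]
    set T := ∑' k : ℕ, (k : ℝ) ^ n / (k.factorial : ℝ)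
    linear_combination (w n * θ ^ n * A * T / (n.factorial : ℝ)) * h10

/-- Mean and variance of the one-parameter Bell distribution:
`E[X] = θeᶿ` and `Var[X] = θeᶿ(1+θ)`. -/
theorem bell_mean_variance (θ : ℝ) (hθ : 0 < θ) :
    HasSum (fun n : ℕ => (n : ℝ) *
        (θ ^ n * bellR n * Real.exp (1 - Real.exp θ) / (Nat.factorial n)))
      (θ * Real.exp θ) ∧
    HasSum (fun n : ℕ => ((n : ℝ) - θ * Real.exp θ) ^ 2 *
        (θ ^ n * bellR n * Real.exp (1 - Real.exp θ) / (Nat.factorial n)))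
      (θ * Real.exp θ * (1 + θ)) := by
  set E := Real.exp θ with hEdef
  set A := Real.exp (-E) with hA
  have hAE : A * Real.exp E = 1 := by
    rw [hA, ← Real.exp_add]; simp
  have hexpk : ∀ k : ℕ, Real.exp (θ * k) = E ^ k := by
    intro k
    rw [hEdef, ← Real.exp_nat_mul, mul_comm]
  -- sum of pmf = 1
  have h0 : HasSum (fun n : ℕ => (1 : ℝ) *
      (θ ^ n * bellR n * Real.exp (1 - Real.exp θ) / (Nat.factorial n))) 1 := by
    refine bell_swap θ hθ _ (fun n => zero_le_one) (fun k => Real.exp (θ * k)) ?_ 1 ?_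
    · intro k
      exact (hasSum_exp' (θ * k)).congr_fun fun n => by rw [one_mul]
    · have := (hasSum_exp' E).mul_left A
      convert this using 1
      · rfl
      · funext k; simp only [hexpk]; ring
      · rw [hAE]
  -- mean
  have h1 : HasSum (fun n : ℕ => (n : ℝ) *
      (θ ^ n * bellR n * Real.exp (1 - Real.exp θ) / (Nat.factorial n)))
      (θ * E) := by
    refine bell_swap θ hθ _ (fun n => Nat.cast_nonneg n)
      (fun k => (θ * k) * Real.exp (θ * k)) ?_ (θ * E) ?_
    · intro k
      exact (hasSum_mul_exp (θ * k)).congr_fun fun n => by ring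
    · have := (hasSum_mul_exp E).mul_left (A * θ)
      convert this using 1
      · rfl
      · funext k; simp only [hexpk]; ring
      · linear_combination -(θ * E) * hAE
  -- second moment
  have h2 : HasSum (fun n : ℕ => ((n : ℝ) ^ 2) *
      (θ ^ n * bellR n * Real.exp (1 - Real.exp θ) / (Nat.factorial n)))
      (θ ^ 2 * (E ^ 2 + E) + θ * E) := by
    refine bell_swap θ hθ _ (fun n => by positivity)
      (fun k => ((θ * k) ^ 2 + θ * k) * Real.exp (θ * k)) ?_ _ ?_
    · intro k
      exact (hasSum_sq_exp (θ * k)).congr_fun fun n => by ring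
    · have h2' := (hasSum_sq_exp E).mul_left (A * θ ^ 2)
      have h1' := (hasSum_mul_exp E).mul_left (A * θ)
      have := h2'.add h1'
      convert this using 1
      · rfl
      · funext k; simp only [hexpk]; ring
      · linear_combination (-(θ ^ 2 * (E ^ 2 + E) + θ * E)) * hAE
  refine ⟨h1, ?_⟩
  have hc := (h2.sub (h1.mul_left (2 * (θ * E)))).add (h0.mul_left ((θ * E) ^ 2))
  convert hc using 1
  · rfl
  · funext n; ring
  · ring
end

section
/- Let (Xₙ) be i.i.d. nonnegative-integer-valued with finite variance, ψ₀ C¹ with bounded derivative, and suppose r₀ = ψ₀(E[X₁]) − P(X₁=0) ≠ 0. Then |√n(ψ₀(μ̂ₙ) − P̂ₙ(0))| → ∞ in probability, i.e. for every M > 0, P(|√n(ψ₀(μ̂ₙ) − P̂ₙ(0))| > M) → 1 as n → ∞. -/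
open MeasureTheory ProbabilityTheory Filter

lemma sqrt_tendsto_atTop' : Tendsto Real.sqrt atTop atTop :=
  tendsto_atTop_atTop_of_monotone (fun _ _ h => Real.sqrt_le_sqrt h)
    (fun b => ⟨b ^ 2, by rw [Real.sqrt_sq_eq_abs]; exact le_abs_self b⟩)

/-- Proposition 1 (consistency): if `r₀ = ψ₀(E[X₁]) - P(X₁=0) ≠ 0`, then
`|√n(ψ₀(μ̂ₙ) - P̂ₙ(0))| → ∞` in probability. -/
theorem test_statistic_diverges_under_alternative {Ω : Type*} [MeasurableSpace Ω]
    (P : Measure Ω) [IsProbabilityMeasure P]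
    (X : ℕ → Ω → ℕ) (hmeas : ∀ i, Measurable (X i))
    (hindep : iIndepFun X P)
    (hident : ∀ i, Measure.map (X i) P = Measure.map (X 0) P)
    (hL2 : MemLp (fun ω => (X 0 ω : ℝ)) 2 P)
    (ψ₀ : ℝ → ℝ) (hψ : ContDiff ℝ 1 ψ₀) (C : ℝ) (hC : ∀ x, |deriv ψ₀ x| ≤ C)
    (halt : ψ₀ (∫ ω, (X 0 ω : ℝ) ∂P) - (P {ω | X 0 ω = 0}).toReal ≠ 0) :
    ∀ M : ℝ, 0 < M →
      Tendsto (fun n : ℕ =>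
          P {ω | M < |Real.sqrt n *
            (ψ₀ ((∑ l ∈ Finset.range n, (X l ω : ℝ)) / n)
              - (∑ l ∈ Finset.range n, if X l ω = 0 then (1:ℝ) else 0) / n)|})
        atTop (nhds 1) := by
  intro M hM
  -- real-valued versions of the random variables
  set Y : ℕ → Ω → ℝ := fun i ω => (X i ω : ℝ) with hY
  set Z : ℕ → Ω → ℝ := fun i ω => if X i ω = 0 then (1:ℝ) else 0 with hZ
  have hYmeas : ∀ i, Measurable (Y i) := fun i =>
    (measurable_from_top (f := (Nat.cast : ℕ → ℝ))).comp (hmeas i)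
  have hZmeas : ∀ i, Measurable (Z i) := fun i =>
    (measurable_from_top (f := fun k : ℕ => if k = 0 then (1:ℝ) else 0)).comp (hmeas i)
  -- identical distribution
  have hXid : ∀ i, IdentDistrib (X i) (X 0) P P := fun i =>
    ⟨(hmeas i).aemeasurable, (hmeas 0).aemeasurable, hident i⟩
  have hYid : ∀ i, IdentDistrib (Y i) (Y 0) P P := fun i =>
    (hXid i).comp (measurable_from_top (f := (Nat.cast : ℕ → ℝ)))
  have hZid : ∀ i, IdentDistrib (Z i) (Z 0) P P := fun i =>
    (hXid i).comp (measurable_from_top (f := fun k : ℕ => if k = 0 then (1:ℝ) else 0))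
  -- pairwise independence
  have hYindep : Pairwise (Function.onFun (IndepFun · · P) Y) := fun i j hij =>
    (hindep.indepFun hij).comp (measurable_from_top (f := (Nat.cast : ℕ → ℝ)))
      (measurable_from_top (f := (Nat.cast : ℕ → ℝ)))
  have hZindep : Pairwise (Function.onFun (IndepFun · · P) Z) := fun i j hij =>
    (hindep.indepFun hij).comp
      (measurable_from_top (f := fun k : ℕ => if k = 0 then (1:ℝ) else 0))
      (measurable_from_top (f := fun k : ℕ => if k = 0 then (1:ℝ) else 0))
  -- integrability
  have hYint : Integrable (Y 0) P := hL2.integrable (by norm_num)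
  have hZint : Integrable (Z 0) P := by
    refine (integrable_const (1:ℝ)).mono' ((hZmeas 0).aestronglyMeasurable) ?_
    filter_upwards with ω
    by_cases h : X 0 ω = 0 <;> simp [hZ, h]
  -- strong laws
  have hSLY := strong_law_ae_real Y hYint hYindep hYid
  have hSLZ := strong_law_ae_real Z hZint hZindep hZid
  -- identify E[Z 0]
  have hA : MeasurableSet {ω | X 0 ω = 0} := hmeas 0 (measurableSet_singleton 0)
  have hEZ : ∫ ω, Z 0 ω ∂P = (P {ω | X 0 ω = 0}).toReal := by
    have : (fun ω => Z 0 ω) = Set.indicator {ω | X 0 ω = 0} (fun _ => (1:ℝ)) := by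
      ext ω; by_cases h : X 0 ω = 0 <;> simp [hZ, Set.indicator_apply, h]
    rw [this, integral_indicator_const _ hA]; simp [measureReal_def]
  rw [hEZ] at hSLZ
  -- the sets
  set A : ℕ → Set Ω := fun n => {ω | M < |Real.sqrt n *
      (ψ₀ ((∑ l ∈ Finset.range n, (X l ω : ℝ)) / n)
        - (∑ l ∈ Finset.range n, if X l ω = 0 then (1:ℝ) else 0) / n)|} with hAdef
  have hAmeas : ∀ n, MeasurableSet (A n) := by
    intro n
    apply measurableSet_lt measurable_const
    apply Measurable.abs
    apply Measurable.const_mul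
    apply Measurable.sub
    · exact hψ.continuous.measurable.comp
        ((Finset.measurable_sum _ (fun l _ => hYmeas l)).div_const _)
    · exact (Finset.measurable_sum _ (fun l _ => hZmeas l)).div_const _
  -- a.e. eventual membership
  have key : ∀ᵐ ω ∂P, ∀ᶠ n in atTop, ω ∈ A n ↔ ω ∈ (Set.univ : Set Ω) := by
    filter_upwards [hSLY, hSLZ] with ω hy hz
    set r := ψ₀ (∫ ω, (X 0 ω : ℝ) ∂P) - (P {ω | X 0 ω = 0}).toReal with hr
    have hd : Tendsto (fun n : ℕ =>
        ψ₀ ((∑ l ∈ Finset.range n, (X l ω : ℝ)) / n)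
          - (∑ l ∈ Finset.range n, if X l ω = 0 then (1:ℝ) else 0) / n) atTop (nhds r) := by
      exact ((hψ.continuous.continuousAt.tendsto.comp hy).sub hz)
    have habs : Tendsto (fun n : ℕ =>
        |ψ₀ ((∑ l ∈ Finset.range n, (X l ω : ℝ)) / n)
          - (∑ l ∈ Finset.range n, if X l ω = 0 then (1:ℝ) else 0) / n|) atTop (nhds |r|) :=
      hd.abs
    have hsq : Tendsto (fun n : ℕ => Real.sqrt n) atTop atTop :=
      sqrt_tendsto_atTop'.comp tendsto_natCast_atTop_atTop
    have hprod : Tendsto (fun n : ℕ => Real.sqrt n *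
        |ψ₀ ((∑ l ∈ Finset.range n, (X l ω : ℝ)) / n)
          - (∑ l ∈ Finset.range n, if X l ω = 0 then (1:ℝ) else 0) / n|) atTop atTop :=
      hsq.atTop_mul_pos (abs_pos.2 halt) habs
    have := hprod.eventually_gt_atTop M
    filter_upwards [this, hsq.eventually_ge_atTop 0] with n hn hn0
    simp only [hAdef, Set.mem_setOf_eq, Set.mem_univ, iff_true]
    rw [abs_mul, abs_of_nonneg hn0]
    exact hn
  have := tendsto_measure_of_ae_tendsto_indicator_of_isFiniteMeasure atTop
    MeasurableSet.univ hAmeas key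
  rw [measure_univ] at this
  exact this
end
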